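/- For all simple regular expressions E₁, E₂ over an alphabet α, the number of distinct sets ∂_w(E₁·E₂) for w ranging over nonempty words over α is at most the number of distinct sets ∂_w(E₁) multiplied by 2 raised to the number of distinct sets ∂_w(E₂) (for w ranging over nonempty words over α). -/

import Mathlib

open scoped Classical

/-- The Antimirov partial derivative of a regular expression with respect to a symbol. -/
noncomputable def aderiv {α : Type*} (a : α) : RegularExpression α → Set (RegularExpression α)
  | .zero => ∅
  | .epsilon => ∅
  | .char b => if b = a then {1} else ∅
  | .plus E₁ E₂ => aderiv a E₁ ∪ aderiv a E₂
  | .comp E₁ E₂ =>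
      if [] ∈ E₁.matches' then ((· * E₂) '' aderiv a E₁) ∪ aderiv a E₂
      else (· * E₂) '' aderiv a E₁
  | .star E₁ => (· * E₁.star) '' aderiv a E₁

/-- Iterated Antimirov partial derivative with respect to a word. -/
noncomputable def aderivWord {α : Type*} : List α → RegularExpression α → Set (RegularExpression α)
  | [], E => {E}
  | a :: w, E => ⋃ F ∈ aderiv a E, aderivWord w F

/-- Left quotient of a language by a word. -/
def lquot {α : Type*} (w : List α) (L : Language α) : Language α := {v | w ++ v ∈ L}

lemma aderivWord_cons {α : Type*} (a : α) (w : List α) (E : RegularExpression α) :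
    aderivWord (a :: w) E = ⋃ F ∈ aderiv a E, aderivWord w F := rfl

/-- Candidate set containing all partial derivatives by nonempty words. -/
def pdCand {α : Type*} : RegularExpression α → Set (RegularExpression α)
  | .zero => ∅
  | .epsilon => ∅
  | .char _ => {1}
  | .plus E₁ E₂ => pdCand E₁ ∪ pdCand E₂
  | .comp E₁ E₂ => (· * E₂) '' pdCand E₁ ∪ pdCand E₂
  | .star E₁ => (· * E₁.star) '' pdCand E₁

lemma pdCand_finite {α : Type*} (E : RegularExpression α) : (pdCand E).Finite := by
  induction E with
  | zero => exact Set.finite_empty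
  | epsilon => exact Set.finite_empty
  | char _ => exact Set.finite_singleton _
  | plus E₁ E₂ ih₁ ih₂ => exact ih₁.union ih₂
  | comp E₁ E₂ ih₁ ih₂ => exact (ih₁.image _).union ih₂
  | star E₁ ih₁ => exact ih₁.image _

lemma aderiv_subset_pdCand {α : Type*} (E : RegularExpression α) (a : α) :
    aderiv a E ⊆ pdCand E := by
  induction E with
  | zero => simp [aderiv, pdCand]
  | epsilon => simp [aderiv, pdCand]
  | char b => by_cases h : b = a <;> simp [aderiv, pdCand, h]
  | plus E₁ E₂ ih₁ ih₂ => exact Set.union_subset_union ih₁ ih₂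
  | comp E₁ E₂ ih₁ ih₂ =>
      show aderiv a (E₁.comp E₂) ⊆ pdCand (E₁.comp E₂)
      simp only [aderiv, pdCand]
      split_ifs with h
      · exact Set.union_subset_union (Set.image_mono ih₁) ih₂
      · exact (Set.image_mono ih₁).trans Set.subset_union_left
  | star E₁ ih₁ => exact Set.image_mono ih₁

lemma pdCand_stable {α : Type*} (E : RegularExpression α) :
    ∀ G ∈ pdCand E, ∀ a, aderiv a G ⊆ pdCand E := by
  induction E with
  | zero => simp [pdCand]
  | epsilon => simp [pdCand]
  | char b =>
      intro G hG a
      simp only [pdCand, Set.mem_singleton_iff] at hG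
      subst hG
      simp [aderiv]
  | plus E₁ E₂ ih₁ ih₂ =>
      rintro G (hG | hG) a
      · exact (ih₁ G hG a).trans Set.subset_union_left
      · exact (ih₂ G hG a).trans Set.subset_union_right
  | comp E₁ E₂ ih₁ ih₂ =>
      rintro G (⟨G', hG', rfl⟩ | hG) a
      · show aderiv a (G' * E₂) ⊆ _
        simp only [aderiv]
        split_ifs with h
        · exact Set.union_subset
            ((Set.image_mono (ih₁ G' hG' a)).trans Set.subset_union_left)
            ((aderiv_subset_pdCand E₂ a).trans Set.subset_union_right)
        · exact (Set.image_mono (ih₁ G' hG' a)).trans Set.subset_union_left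
      · exact (ih₂ G hG a).trans Set.subset_union_right
  | star E₁ ih₁ =>
      rintro G ⟨G', hG', rfl⟩ a
      show aderiv a (G' * E₁.star) ⊆ _
      simp only [aderiv]
      have h1 : (· * E₁.star) '' aderiv a G' ⊆ (· * E₁.star) '' pdCand E₁ :=
        Set.image_mono (ih₁ G' hG' a)
      split_ifs with h
      · exact Set.union_subset h1 (Set.image_mono (aderiv_subset_pdCand E₁ a))
      · exact h1

lemma aderivWord_subset_pdCand {α : Type*} (E : RegularExpression α) :
    ∀ (w : List α), ∀ G ∈ pdCand E, aderivWord w G ⊆ pdCand E := by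
  intro w
  induction w with
  | nil => intro G hG; simpa [aderivWord] using hG
  | cons a w ih =>
      intro G hG
      simp only [aderivWord, Set.iUnion_subset_iff]
      intro F hF
      exact ih F (pdCand_stable E G hG a hF)

lemma aderivWord_cons_subset {α : Type*} (E : RegularExpression α) (a : α) (w : List α) :
    aderivWord (a :: w) E ⊆ pdCand E := by
  simp only [aderivWord, Set.iUnion_subset_iff]
  intro F hF
  exact aderivWord_subset_pdCand E w F (aderiv_subset_pdCand E a hF)

lemma biUnion_decomp {α β : Type*} {s : Set α} {f g : α → Set β} {h : α → Set (Set β)}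
    (hfg : ∀ x ∈ s, g x = f x ∪ ⋃₀ h x) :
    ⋃ x ∈ s, g x = (⋃ x ∈ s, f x) ∪ ⋃₀ (⋃ x ∈ s, h x) := by
  ext y
  simp only [Set.mem_iUnion, Set.mem_union, Set.mem_sUnion, exists_prop]
  constructor
  · rintro ⟨x, hx, hy⟩
    rw [hfg x hx] at hy
    rcases hy with hy | ⟨T, hT, hy⟩
    · exact Or.inl ⟨x, hx, hy⟩
    · exact Or.inr ⟨T, ⟨x, hx, hT⟩, hy⟩
  · rintro (⟨x, hx, hy⟩ | ⟨T, ⟨x, hx, hT⟩, hy⟩)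
    · exact ⟨x, hx, by rw [hfg x hx]; exact Or.inl hy⟩
    · exact ⟨x, hx, by rw [hfg x hx]; exact Or.inr ⟨T, hT, hy⟩⟩

/-- Key decomposition of derivatives of a product. -/
lemma aderivWord_comp_decomp {α : Type*} (E₂ : RegularExpression α) :
    ∀ (w : List α) (G : RegularExpression α),
      ∃ 𝒞 : Set (Set (RegularExpression α)),
        (∀ T ∈ 𝒞, ∃ (a : α) (v : List α), T = aderivWord (a :: v) E₂) ∧
        aderivWord w (G * E₂) = (· * E₂) '' aderivWord w G ∪ ⋃₀ 𝒞 := by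
  intro w
  induction w with
  | nil => exact fun G => ⟨∅, by simp, by simp [aderivWord]⟩
  | cons a w ih =>
      intro G
      choose 𝒞 h𝒞mem h𝒞eq using ih
      have hmain : ⋃ F ∈ (· * E₂) '' aderiv a G, aderivWord w F =
          (· * E₂) '' aderivWord (a :: w) G ∪ ⋃₀ (⋃ G' ∈ aderiv a G, 𝒞 G') := by
        rw [Set.biUnion_image]
        rw [biUnion_decomp (f := fun G' => (· * E₂) '' aderivWord w G') (h := 𝒞)
          (fun G' _ => h𝒞eq G')]
        rw [aderivWord_cons, Set.image_iUnion₂]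
      have hmemU : ∀ T ∈ ⋃ G' ∈ aderiv a G, 𝒞 G',
          ∃ (a : α) (v : List α), T = aderivWord (a :: v) E₂ := by
        intro T hT
        simp only [Set.mem_iUnion, exists_prop] at hT
        obtain ⟨G', _, hT⟩ := hT
        exact h𝒞mem G' T hT
      by_cases h : [] ∈ G.matches'
      · refine ⟨(⋃ G' ∈ aderiv a G, 𝒞 G') ∪ {aderivWord (a :: w) E₂}, ?_, ?_⟩
        · rintro T (hT | hT)
          · exact hmemU T hT
          · exact ⟨a, w, hT⟩
        · have hstep : aderiv a (G * E₂) = (· * E₂) '' aderiv a G ∪ aderiv a E₂ := by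
            show (if _ then _ else _) = _
            rw [if_pos h]
          rw [aderivWord_cons, hstep, Set.biUnion_union, hmain, ← aderivWord_cons,
            Set.sUnion_union, Set.sUnion_singleton, Set.union_assoc]
      · refine ⟨⋃ G' ∈ aderiv a G, 𝒞 G', hmemU, ?_⟩
        have hstep : aderiv a (G * E₂) = (· * E₂) '' aderiv a G := by
          show (if _ then _ else _) = _
          rw [if_neg h]
        rw [aderivWord_cons, hstep, hmain]

lemma ncard_powerset' {α : Type*} {s : Set α} (h : s.Finite) :
    {t | t ⊆ s}.ncard = 2 ^ s.ncard := by
  classical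
  have he : {t | t ⊆ s} = ((↑) : Finset α → Set α) '' ↑(h.toFinset.powerset) := by
    ext t
    simp only [Set.mem_setOf_eq, Set.mem_image, Finset.mem_coe, Finset.mem_powerset]
    constructor
    · intro ht
      refine ⟨(h.subset ht).toFinset, ?_, by simp⟩
      rw [Set.Finite.toFinset_subset, Set.Finite.coe_toFinset]
      exact ht
    · rintro ⟨u, hu, rfl⟩
      rw [← Set.Finite.coe_toFinset h]
      exact_mod_cast hu
  rw [he, Set.ncard_image_of_injective _ Finset.coe_injective,
    Set.ncard_coe_finset, Finset.card_powerset, Set.ncard_eq_toFinset_card _ h]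

lemma ncard_prod' {α β : Type*} (s : Set α) (t : Set β) :
    (s ×ˢ t).ncard = s.ncard * t.ncard := by
  rw [← Nat.card_coe_set_eq, ← Nat.card_coe_set_eq, ← Nat.card_coe_set_eq,
    ← Nat.card_prod]
  exact Nat.card_congr (Equiv.Set.prod s t)

theorem antimirov_comp_card {α : Type*} (E₁ E₂ : RegularExpression α) :
    {S | ∃ (a : α) (w : List α), S = aderivWord (a :: w) (E₁ * E₂)}.ncard ≤
      {S | ∃ (a : α) (w : List α), S = aderivWord (a :: w) E₁}.ncard *
        2 ^ {S | ∃ (a : α) (w : List α), S = aderivWord (a :: w) E₂}.ncard := by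
  set A := {S | ∃ (a : α) (w : List α), S = aderivWord (a :: w) E₁} with hAdef
  set B := {S | ∃ (a : α) (w : List α), S = aderivWord (a :: w) E₂} with hBdef
  have hAfin : A.Finite := by
    refine ((pdCand_finite E₁).finite_subsets).subset ?_
    rintro S ⟨a, w, rfl⟩
    exact aderivWord_cons_subset E₁ a w
  have hBfin : B.Finite := by
    refine ((pdCand_finite E₂).finite_subsets).subset ?_
    rintro S ⟨a, w, rfl⟩
    exact aderivWord_cons_subset E₂ a w
  set P := A ×ˢ {𝒞 | 𝒞 ⊆ B} with hPdef
  have hPfin : P.Finite := hAfin.prod hBfin.finite_subsets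
  set f : Set (RegularExpression α) × Set (Set (RegularExpression α)) →
      Set (RegularExpression α) := fun p => (· * E₂) '' p.1 ∪ ⋃₀ p.2 with hfdef
  have hsub : {S | ∃ (a : α) (w : List α), S = aderivWord (a :: w) (E₁ * E₂)} ⊆ f '' P := by
    rintro S ⟨a, w, rfl⟩
    obtain ⟨𝒞, h𝒞mem, h𝒞eq⟩ := aderivWord_comp_decomp E₂ (a :: w) E₁
    refine ⟨(aderivWord (a :: w) E₁, 𝒞), ⟨⟨a, w, rfl⟩, ?_⟩, h𝒞eq.symm⟩
    intro T hT
    obtain ⟨a', v, hTv⟩ := h𝒞mem T hT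
    exact ⟨a', v, hTv⟩
  calc {S | ∃ (a : α) (w : List α), S = aderivWord (a :: w) (E₁ * E₂)}.ncard
      ≤ (f '' P).ncard := Set.ncard_le_ncard hsub (hPfin.image f)
    _ ≤ P.ncard := Set.ncard_image_le hPfin
    _ = A.ncard * {𝒞 | 𝒞 ⊆ B}.ncard := ncard_prod' _ _
    _ = A.ncard * 2 ^ B.ncard := by rw [ncard_powerset' hBfin]
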